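/- Let A ⊂ R^d be a convex body (compact, equal to the closure of its nonempty interior) and let ω*_N be an N-point configuration optimal for the s-polarization problem P_s(A;N) with minimizing point ỹ attained for a perturbed configuration. If x ∈ ω*_N, x_∂ ∈ ∂A achieves dist(x, ∂A), and the outward supporting hyperplane at x_∂ is {z : z(d) = x_∂(d)} with A contained in {z : z(d) ≤ x_∂(d)}, then for the configuration ω̃_N obtained by replacing x by x̃ = x - ε e_d ∈ A (ε > 0 small) and any point ỹ ∈ A attaining P_s(A; ω̃_N), one has ỹ(d) ≥ x(d) - ε/2. -/

import Mathlib

open scoped ENNReal BigOperators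

/-- Let `A ⊆ ℝ^d` be a convex body, `ω` an `N`-point configuration optimal
for `P_s(A;N)`, `x = ω j₀ ∈ ω`, `x∂ ∈ ∂A` achieving `dist(x, ∂A)`, with supporting
hyperplane `{z : z(d) = x∂(d)}` and `A ⊆ {z : z(d) ≤ x∂(d)}`.  If `x̃ = x - ε e_d ∈ A`
(with `ε > 0`), `ω̃` is `ω` with `x` replaced by `x̃`, and `ỹ ∈ A` attains
`P_s(A; ω̃)`, then `ỹ(d) ≥ x(d) - ε/2`. -/
theorem stmt_3 {d : ℕ} (hd : 0 < d) (A : Set (EuclideanSpace ℝ (Fin d)))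
    (hA : IsCompact A) (hconv : Convex ℝ A) (hbody : A = closure (interior A))
    (hne : (interior A).Nonempty)
    (s : ℝ) (hs : 0 < s) (N : ℕ) (hN : 0 < N)
    (ω : Fin N → EuclideanSpace ℝ (Fin d)) (hω : ∀ j, ω j ∈ A)
    (hopt : (⨅ y ∈ A, ∑ j, (ENNReal.ofReal (dist y (ω j)))⁻¹ ^ s)
      = ⨆ ω' : {ω' : Fin N → EuclideanSpace ℝ (Fin d) // ∀ j, ω' j ∈ A},
          ⨅ y ∈ A, ∑ j, (ENNReal.ofReal (dist y (ω'.1 j)))⁻¹ ^ s)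
    (j₀ : Fin N) (x : EuclideanSpace ℝ (Fin d)) (hx : x = ω j₀)
    (xB : EuclideanSpace ℝ (Fin d)) (hxB : xB ∈ frontier A)
    (hdistB : dist x xB = Metric.infDist x (frontier A))
    (i : Fin d) (hi : (i : ℕ) = d - 1)
    (hplane : ∀ z ∈ A, z i ≤ xB i)
    (ε : ℝ) (hε : 0 < ε)
    (xt : EuclideanSpace ℝ (Fin d)) (hxt : xt = x - ε • EuclideanSpace.single i 1)
    (hxtA : xt ∈ A)
    (ωt : Fin N → EuclideanSpace ℝ (Fin d)) (hωt : ωt = Function.update ω j₀ xt)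
    (yt : EuclideanSpace ℝ (Fin d)) (hyt : yt ∈ A)
    (hatt : ∑ j, (ENNReal.ofReal (dist yt (ωt j)))⁻¹ ^ s
      = ⨅ y ∈ A, ∑ j, (ENNReal.ofReal (dist y (ωt j)))⁻¹ ^ s) :
    x i - ε / 2 ≤ yt i := by
  haveI : Nonempty (Fin d) := ⟨⟨0, hd⟩⟩
  -- ωt is admissible
  have hωtA : ∀ j, ωt j ∈ A := by
    intro j
    rw [hωt]
    rcases eq_or_ne j j₀ with h | h
    · rw [h, Function.update_self]; exact hxtA
    · rw [Function.update_of_ne h]; exact hω j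
  -- Step 1: F ωt yt ≤ F ω yt
  have key : ∑ j, (ENNReal.ofReal (dist yt (ωt j)))⁻¹ ^ s
      ≤ ∑ j, (ENNReal.ofReal (dist yt (ω j)))⁻¹ ^ s := by
    calc ∑ j, (ENNReal.ofReal (dist yt (ωt j)))⁻¹ ^ s
        = ⨅ y ∈ A, ∑ j, (ENNReal.ofReal (dist y (ωt j)))⁻¹ ^ s := hatt
      _ ≤ ⨆ ω' : {ω' : Fin N → EuclideanSpace ℝ (Fin d) // ∀ j, ω' j ∈ A},
          ⨅ y ∈ A, ∑ j, (ENNReal.ofReal (dist y (ω'.1 j)))⁻¹ ^ s :=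
          le_iSup (fun ω' : {ω' : Fin N → EuclideanSpace ℝ (Fin d) // ∀ j, ω' j ∈ A} =>
            ⨅ y ∈ A, ∑ j, (ENNReal.ofReal (dist y (ω'.1 j)))⁻¹ ^ s) ⟨ωt, hωtA⟩
      _ = ⨅ y ∈ A, ∑ j, (ENNReal.ofReal (dist y (ω j)))⁻¹ ^ s := hopt.symm
      _ ≤ ∑ j, (ENNReal.ofReal (dist yt (ω j)))⁻¹ ^ s := biInf_le _ hyt
  -- Step 2: a good point with all distances positive, hence finiteness
  obtain ⟨y₀, hy₀o, hy₀c⟩ : ∃ y₀, y₀ ∈ interior A ∧ y₀ ∈ (Set.range ωt)ᶜ := by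
    have hdense : Dense (Set.range ωt)ᶜ :=
      Set.Countable.dense_compl ℝ (Set.finite_range ωt).countable
    obtain ⟨y₀, h1, h2⟩ := hdense.inter_open_nonempty (interior A) isOpen_interior hne
    exact ⟨y₀, h1, h2⟩
  have hfin : ∑ j, (ENNReal.ofReal (dist y₀ (ωt j)))⁻¹ ^ s < ⊤ := by
    refine ENNReal.sum_lt_top.2 fun j _ => ?_
    have hdpos : 0 < dist y₀ (ωt j) := by
      rw [dist_pos]
      intro h
      exact hy₀c ⟨j, h.symm⟩
    refine ENNReal.rpow_lt_top_of_nonneg hs.le ?_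
    simp [ENNReal.inv_ne_top, ENNReal.ofReal_pos.2 hdpos |>.ne']
  have hsumfin : ∑ j, (ENNReal.ofReal (dist yt (ωt j)))⁻¹ ^ s < ⊤ := by
    calc ∑ j, (ENNReal.ofReal (dist yt (ωt j)))⁻¹ ^ s
        = ⨅ y ∈ A, ∑ j, (ENNReal.ofReal (dist y (ωt j)))⁻¹ ^ s := hatt
      _ ≤ ∑ j, (ENNReal.ofReal (dist y₀ (ωt j)))⁻¹ ^ s :=
          biInf_le _ (interior_subset hy₀o)
      _ < ⊤ := hfin
  -- Step 3: cancel common terms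
  have hSfin : ∑ j ∈ Finset.univ.erase j₀, (ENNReal.ofReal (dist yt (ωt j)))⁻¹ ^ s ≠ ⊤ := by
    refine ne_top_of_le_ne_top hsumfin.ne (Finset.sum_le_sum_of_subset (Finset.erase_subset _ _))
  have hterm : (ENNReal.ofReal (dist yt xt))⁻¹ ^ s ≤ (ENNReal.ofReal (dist yt x))⁻¹ ^ s := by
    have e1 : ∑ j, (ENNReal.ofReal (dist yt (ωt j)))⁻¹ ^ s
        = (ENNReal.ofReal (dist yt xt))⁻¹ ^ s
          + ∑ j ∈ Finset.univ.erase j₀, (ENNReal.ofReal (dist yt (ωt j)))⁻¹ ^ s := by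
      rw [← Finset.add_sum_erase _ _ (Finset.mem_univ j₀), hωt, Function.update_self]
    have e2 : ∑ j, (ENNReal.ofReal (dist yt (ω j)))⁻¹ ^ s
        = (ENNReal.ofReal (dist yt x))⁻¹ ^ s
          + ∑ j ∈ Finset.univ.erase j₀, (ENNReal.ofReal (dist yt (ωt j)))⁻¹ ^ s := by
      rw [← Finset.add_sum_erase _ _ (Finset.mem_univ j₀), ← hx]
      congr 1
      refine Finset.sum_congr rfl fun j hj => ?_
      rw [hωt, Function.update_of_ne (Finset.mem_erase.1 hj).1]
    rw [e1, e2] at key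
    exact (ENNReal.add_le_add_iff_right hSfin).1 key
  -- Step 4: dist yt x ≤ dist yt xt
  have hdist : dist yt x ≤ dist yt xt := by
    by_contra h
    push_neg at h
    have hxpos : 0 < dist yt x := lt_of_le_of_lt dist_nonneg h
    rcases eq_or_lt_of_le (dist_nonneg : (0:ℝ) ≤ dist yt xt) with h0 | h0
    · -- dist yt xt = 0 : LHS = ∞ but RHS < ∞
      have : (ENNReal.ofReal (dist yt xt))⁻¹ ^ s = ⊤ := by
        rw [← h0]
        simp [ENNReal.top_rpow_of_pos hs]
      rw [this, top_le_iff] at hterm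
      have : (ENNReal.ofReal (dist yt x))⁻¹ ^ s < ⊤ := by
        refine ENNReal.rpow_lt_top_of_nonneg hs.le ?_
        simp [ENNReal.inv_ne_top, (ENNReal.ofReal_pos.2 hxpos).ne']
      exact this.ne hterm
    · have h1 : ENNReal.ofReal (dist yt xt) < ENNReal.ofReal (dist yt x) :=
        (ENNReal.ofReal_lt_ofReal_iff hxpos).2 h
      have h2 : (ENNReal.ofReal (dist yt x))⁻¹ < (ENNReal.ofReal (dist yt xt))⁻¹ :=
        ENNReal.inv_lt_inv.2 h1
      have h3 : (ENNReal.ofReal (dist yt x))⁻¹ ^ s < (ENNReal.ofReal (dist yt xt))⁻¹ ^ s := by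
        apply ENNReal.rpow_lt_rpow h2 hs
      exact absurd hterm h3.not_ge
  -- Step 5: coordinate inequality
  have hnorm : ‖yt - x‖ ≤ ‖yt - xt‖ := by
    simpa [dist_eq_norm] using hdist
  have hexp : yt - xt = (yt - x) + ε • EuclideanSpace.single i 1 := by
    rw [hxt]; abel
  have h2 : (inner ℝ (yt - x) (ε • EuclideanSpace.single i (1:ℝ)) : ℝ) = ε * (yt i - x i) := by
    rw [real_inner_smul_right, EuclideanSpace.inner_single_right]
    simp [PiLp.sub_apply]
  have h3 : ‖ε • EuclideanSpace.single i (1:ℝ)‖ ^ 2 = ε ^ 2 := by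
    rw [norm_smul]
    simp [EuclideanSpace.norm_single, abs_of_pos hε]
  have h1 : ‖yt - xt‖ ^ 2 = ‖yt - x‖ ^ 2
      + 2 * (inner ℝ (yt - x) (ε • EuclideanSpace.single i (1:ℝ)) : ℝ)
      + ‖ε • EuclideanSpace.single i (1:ℝ)‖ ^ 2 := by
    rw [hexp]; exact norm_add_sq_real _ _
  have h4 : ‖yt - x‖ ^ 2 ≤ ‖yt - xt‖ ^ 2 :=
    pow_le_pow_left₀ (norm_nonneg _) hnorm 2
  rw [h1, h2, h3] at h4
  nlinarith [h4]
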